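/- For real μ > -1, the function p_{μ,a}(u,r) = (r/u)^μ · (r/a) · exp(-(u²+r²)/(2a)) · I_μ(ur/a) is a probability density in r on (0,∞) for each fixed u > 0 and a > 0, i.e., ∫_0^∞ p_{μ,a}(u,r) dr = 1. -/

import Mathlib

open MeasureTheory

/-- Modified Bessel function of the first kind of real order `μ`,
defined by its series for positive real arguments. -/
noncomputable def besselIReal (μ : ℝ) (ξ : ℝ) : ℝ :=
  ∑' n : ℕ, (ξ / 2) ^ (μ + 2 * (n : ℝ)) / ((n.factorial : ℝ) * Real.Gamma (μ + 1 + n))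

theorem bessel_semigroup_density_integral (μ : ℝ) (hμ : -1 < μ)
    (a u : ℝ) (ha : 0 < a) (hu : 0 < u) :
    ∫ r in Set.Ioi (0 : ℝ),
        (r / u) ^ μ * (r / a) * Real.exp (-(u ^ 2 + r ^ 2) / (2 * a)) *
          besselIReal μ (u * r / a) = 1 := by
  have h2a : (0:ℝ) < 2 * a := by linarith
  set x : ℝ := u ^ 2 / (2 * a) with hxdef
  have hx0 : 0 < x := by positivity
  set b : ℝ := 1 / (2 * a) with hbdef
  have hb : 0 < b := by positivity
  -- denominators
  have hD : ∀ n : ℕ, 0 < (n.factorial : ℝ) * Real.Gamma (μ + 1 + n) := by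
    intro n
    have h1 : (0:ℝ) < μ + 1 + n := by
      have : (0:ℝ) ≤ n := Nat.cast_nonneg n
      linarith
    have := Real.Gamma_pos_of_pos h1
    positivity
  -- the summands
  set c : ℕ → ℝ := fun n =>
    u ^ (-μ) * (u / (2 * a)) ^ (μ + 2 * (n : ℝ)) * Real.exp (-(u ^ 2 / (2 * a))) /
      (a * ((n.factorial : ℝ) * Real.Gamma (μ + 1 + n))) with hcdef
  have hc : ∀ n, 0 < c n := by
    intro n
    have h1 : (0:ℝ) < u ^ (-μ) := Real.rpow_pos_of_pos hu _
    have h2 : (0:ℝ) < (u / (2 * a)) ^ (μ + 2 * (n : ℝ)) :=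
      Real.rpow_pos_of_pos (by positivity) _
    have h3 := hD n
    positivity
  set q : ℕ → ℝ := fun n => μ + (μ + 2 * (n : ℝ)) + 1 with hqdef
  have hq : ∀ n, -1 < q n := by
    intro n
    have : (0:ℝ) ≤ n := Nat.cast_nonneg n
    simp only [hqdef]
    linarith
  set g : ℕ → ℝ → ℝ := fun n r =>
    c n * (r ^ q n * Real.exp (-b * r ^ (2:ℝ))) with hgdef
  -- Step A : pointwise series expansion of the integrand
  have stepA : ∀ r ∈ Set.Ioi (0:ℝ),
      (r / u) ^ μ * (r / a) * Real.exp (-(u ^ 2 + r ^ 2) / (2 * a)) *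
        besselIReal μ (u * r / a) = ∑' n : ℕ, g n r := by
    intro r hr
    rw [Set.mem_Ioi] at hr
    simp only [besselIReal]
    rw [← tsum_mul_left]
    refine tsum_congr fun n => ?_
    have hξ : u * r / a / 2 = u / (2 * a) * r := by
      rw [div_div, div_mul_eq_mul_div, mul_comm a 2]
    rw [hξ, Real.mul_rpow (by positivity) hr.le]
    have e1 : (r / u) ^ μ = r ^ μ * (u ^ (-μ)) := by
      rw [Real.div_rpow hr.le hu.le, Real.rpow_neg hu.le, div_eq_mul_inv]
    have e2 : Real.exp (-(u ^ 2 + r ^ 2) / (2 * a)) =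
        Real.exp (-(u ^ 2 / (2 * a))) * Real.exp (-b * r ^ (2:ℝ)) := by
      rw [Real.rpow_two, ← Real.exp_add, hbdef]
      congr 1
      field_simp
      ring
    have e3 : r ^ q n = r ^ μ * r ^ (μ + 2 * (n : ℝ)) * r := by
      simp only [hqdef]
      rw [Real.rpow_add hr, Real.rpow_add hr, Real.rpow_one]
    simp only [hgdef, hcdef]
    rw [e1, e2, e3]
    ring
  -- Step B : integrability of each summand
  have stepB : ∀ n : ℕ, IntegrableOn (g n) (Set.Ioi (0:ℝ)) := by
    intro n
    exact (integrableOn_rpow_mul_exp_neg_mul_rpow (hq n) two_pos hb).const_mul (c n)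
  -- Step C : value of each term integral
  have stepC : ∀ n : ℕ, ∫ r in Set.Ioi (0:ℝ), g n r = Real.exp (-x) * x ^ n / n.factorial := by
    intro n
    simp only [hgdef]
    rw [MeasureTheory.integral_const_mul,
      integral_rpow_mul_exp_neg_mul_rpow two_pos (hq n) hb]
    have hq1 : -(q n + 1) / 2 = -(μ + 1 + (n:ℝ)) := by
      simp only [hqdef]; ring
    have hq2 : (q n + 1) / 2 = μ + 1 + (n:ℝ) := by
      simp only [hqdef]; ring
    rw [hq1, hq2]
    have E1 : b ^ (-(μ + 1 + (n:ℝ))) = (2 * a) ^ (μ + 1 + (n:ℝ)) := by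
      rw [hbdef, one_div, Real.inv_rpow h2a.le, Real.rpow_neg h2a.le, inv_inv]
    have E2 : (2 * a) ^ (μ + 1 + (n:ℝ)) = (2 * a) ^ μ * (2 * a) * (2 * a) ^ n := by
      rw [Real.rpow_add h2a, Real.rpow_add h2a, Real.rpow_one, Real.rpow_natCast]
    have A3 : ∀ y : ℝ, 0 < y → y ^ (2 * (n:ℝ)) = (y ^ 2) ^ n := by
      intro y hy
      rw [Real.rpow_mul hy.le, Real.rpow_two, Real.rpow_natCast]
    have E3 : (u / (2 * a)) ^ (μ + 2 * (n:ℝ)) =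
        u ^ μ * (u ^ 2) ^ n / ((2 * a) ^ μ * ((2 * a) ^ 2) ^ n) := by
      rw [Real.div_rpow hu.le h2a.le, Real.rpow_add hu, Real.rpow_add h2a,
        A3 u hu, A3 (2 * a) h2a]
    have E4 : u ^ (-μ) = (u ^ μ)⁻¹ := by
      rw [Real.rpow_neg hu.le]
    have E5 : x ^ n = (u ^ 2) ^ n / (2 * a) ^ n := by
      rw [hxdef, div_pow]
    have E6 : Real.exp (-(u ^ 2 / (2 * a))) = Real.exp (-x) := by rw [hxdef]
    simp only [hcdef]
    rw [E1, E2, E3, E4, E5, E6]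
    have h1 : u ^ μ ≠ 0 := ne_of_gt (Real.rpow_pos_of_pos hu μ)
    have h2 : (2 * a) ^ μ ≠ 0 := ne_of_gt (Real.rpow_pos_of_pos h2a μ)
    have h3 : ((2 * a) : ℝ) ≠ 0 := ne_of_gt h2a
    have h4 : (n.factorial : ℝ) ≠ 0 := Nat.cast_ne_zero.mpr n.factorial_ne_zero
    have h5 : Real.Gamma (μ + 1 + n) ≠ 0 := by
      have h0 : (0:ℝ) < μ + 1 + n := by
        have : (0:ℝ) ≤ n := Nat.cast_nonneg n
        linarith
      exact ne_of_gt (Real.Gamma_pos_of_pos h0)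
    have h6 : a ≠ 0 := ne_of_gt ha
    field_simp
    ring_nf
    rw [show ((4:ℝ)) ^ n = 2 ^ (n * 2) by
      rw [show ((4:ℝ)) = 2 ^ 2 by norm_num, ← pow_mul, mul_comm]]
  -- Poisson weights sum to 1
  have htsummable : Summable (fun n : ℕ => Real.exp (-x) * x ^ n / n.factorial) := by
    simpa [mul_div_assoc] using (Real.summable_pow_div_factorial x).mul_left (Real.exp (-x))
  have htnonneg : ∀ n : ℕ, 0 ≤ Real.exp (-x) * x ^ n / n.factorial := by
    intro n; positivity
  have htsum : ∑' n : ℕ, Real.exp (-x) * x ^ n / n.factorial = 1 := by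
    have hE : ∑' n : ℕ, x ^ n / n.factorial = Real.exp x := by
      rw [Real.exp_eq_exp_ℝ, NormedSpace.exp_eq_tsum_div]
    calc ∑' n : ℕ, Real.exp (-x) * x ^ n / n.factorial
        = Real.exp (-x) * ∑' n : ℕ, x ^ n / n.factorial := by
          rw [← tsum_mul_left]
          exact tsum_congr fun n => by rw [mul_div_assoc]
      _ = 1 := by rw [hE, ← Real.exp_add, neg_add_cancel, Real.exp_zero]
  -- nonnegativity of each summand a.e. on Ioi 0
  have hgnn : ∀ n : ℕ, 0 ≤ᵐ[volume.restrict (Set.Ioi (0:ℝ))] g n := by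
    intro n
    filter_upwards [ae_restrict_mem measurableSet_Ioi] with r hr
    rw [Set.mem_Ioi] at hr
    have h1 : 0 < r ^ q n := Real.rpow_pos_of_pos hr _
    have h2 := hc n
    simp only [hgdef, Pi.zero_apply]
    positivity
  -- lintegral of each summand
  have hlint : ∀ n : ℕ, ∫⁻ r in Set.Ioi (0:ℝ), (‖g n r‖₊ : ENNReal) =
      ENNReal.ofReal (Real.exp (-x) * x ^ n / n.factorial) := by
    intro n
    rw [← stepC n, MeasureTheory.ofReal_integral_eq_lintegral_ofReal (stepB n) (hgnn n)]
    refine lintegral_congr_ae ?_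
    filter_upwards [hgnn n] with r hr
    exact Real.enorm_eq_ofReal hr
  have hfin : ∑' n : ℕ, ∫⁻ r in Set.Ioi (0:ℝ), (‖g n r‖₊ : ENNReal) ≠ ⊤ := by
    have : ∑' n : ℕ, ∫⁻ r in Set.Ioi (0:ℝ), (‖g n r‖₊ : ENNReal) = ENNReal.ofReal 1 := by
      rw [tsum_congr hlint, ← ENNReal.ofReal_tsum_of_nonneg htnonneg htsummable, htsum]
    rw [this]
    exact ENNReal.ofReal_ne_top
  rw [MeasureTheory.setIntegral_congr_fun measurableSet_Ioi stepA,
    MeasureTheory.integral_tsum (fun n => (stepB n).aestronglyMeasurable) hfin,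
    tsum_congr stepC, htsum]
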